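/- Let X be a real random variable whose law has a Lebesgue density f : ℝ → [0,∞) that is Lipschitz continuous with Lipschitz constant L > 0, and suppose E[X⁴] ≤ 1. Then for every x ≠ 0, f(x) ≤ √(2L)/x². Consequently, if in addition f is bounded by K, then f(x) ≤ min(K, √(2L)·x^{-2}) for all x ≠ 0. -/

import Mathlib

open MeasureTheory Real

lemma key_pos (f : ℝ → ℝ) (L : ℝ) (hL : 0 < L)
    (hf_nonneg : ∀ x, 0 ≤ f x)
    (hf_lip : ∀ x y : ℝ, |f x - f y| ≤ L * |x - y|)
    (hmom_int : Integrable (fun x : ℝ => x ^ 4 * f x))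
    (hmom : ∫ x : ℝ, x ^ 4 * f x ≤ 1)
    (x : ℝ) (hx : 0 < x) : f x ≤ Real.sqrt (2 * L) / x ^ 2 := by
  set c := f x with hc
  have hc0 : 0 ≤ c := hf_nonneg x
  set δ := c / L with hδdef
  have hδ0 : 0 ≤ δ := div_nonneg hc0 hL.le
  have hab : x ≤ x + δ := by linarith
  -- pointwise bound on the interval
  have hpt : ∀ y ∈ Set.Icc x (x + δ), x ^ 4 * (c - L * (y - x)) ≤ y ^ 4 * f y := by
    intro y hy
    obtain ⟨hy1, hy2⟩ := hy
    have h1 : c - L * (y - x) ≤ f y := by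
      have := hf_lip x y
      have habs : |x - y| = y - x := by
        rw [abs_sub_comm, abs_of_nonneg (by linarith)]
      rw [habs] at this
      have := abs_le.mp this
      linarith [this.1]
    have h2 : 0 ≤ c - L * (y - x) := by
      have : L * (y - x) ≤ L * δ := by
        apply mul_le_mul_of_nonneg_left (by linarith) hL.le
      have hLδ : L * δ = c := by
        rw [hδdef]; exact mul_div_cancel₀ c hL.ne'
      linarith
    have h3 : x ^ 4 ≤ y ^ 4 := pow_le_pow_left₀ hx.le hy1 4
    exact mul_le_mul h3 h1 h2 (pow_nonneg (by linarith) 4)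
  have hint1 : IntervalIntegrable (fun y => y ^ 4 * f y) volume x (x + δ) :=
    hmom_int.intervalIntegrable
  have hint2 : IntervalIntegrable (fun y => x ^ 4 * (c - L * (y - x))) volume x (x + δ) := by
    apply Continuous.intervalIntegrable
    fun_prop
  have h1 : (∫ y in x..(x + δ), x ^ 4 * (c - L * (y - x)))
      ≤ ∫ y in x..(x + δ), y ^ 4 * f y :=
    intervalIntegral.integral_mono_on hab hint2 hint1 hpt
  have h2 : (∫ y in x..(x + δ), y ^ 4 * f y) ≤ ∫ y : ℝ, y ^ 4 * f y := by
    rw [intervalIntegral.integral_of_le hab]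
    exact setIntegral_le_integral hmom_int
      (ae_of_all _ fun y => mul_nonneg (by positivity) (hf_nonneg y))
  have hcomp : (∫ y in x..(x + δ), x ^ 4 * (c - L * (y - x)))
      = x ^ 4 * c ^ 2 / (2 * L) := by
    have heq : (fun y : ℝ => x ^ 4 * (c - L * (y - x)))
        = fun y : ℝ => (x ^ 4 * (c + L * x)) - (x ^ 4 * L) * y := by
      funext y; ring
    rw [heq, intervalIntegral.integral_sub
      (by apply Continuous.intervalIntegrable; fun_prop)
      (by apply Continuous.intervalIntegrable; fun_prop),
      intervalIntegral.integral_const, intervalIntegral.integral_const_mul,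
      integral_id]
    simp only [smul_eq_mul]
    have hL' : L ≠ 0 := hL.ne'
    field_simp [hδdef]
    have hLδ : L * δ = c := by rw [hδdef]; exact mul_div_cancel₀ c hL.ne'
    linear_combination (c - L * δ) * hLδ
  have hkey : x ^ 4 * c ^ 2 / (2 * L) ≤ 1 := by
    rw [← hcomp]; exact h1.trans (h2.trans hmom)
  have hkey2 : x ^ 4 * c ^ 2 ≤ 2 * L := by
    rwa [div_le_one (by positivity)] at hkey
  have hx2 : (0:ℝ) < x ^ 2 := by positivity
  rw [le_div_iff₀ hx2]
  calc c * x ^ 2 = Real.sqrt ((c * x ^ 2) ^ 2) :=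
        (Real.sqrt_sq (by positivity)).symm
    _ ≤ Real.sqrt (2 * L) := Real.sqrt_le_sqrt (by nlinarith)

/-- If `f` is a Lipschitz (constant `L > 0`) probability density on `ℝ` with fourth moment
`∫ x⁴ f(x) dx ≤ 1`, then `f x ≤ √(2L)/x²` for every `x ≠ 0`; consequently, if moreover
`f ≤ K`, then `f x ≤ min (K, √(2L)/x²)` for all `x ≠ 0`. -/
theorem stmt3 (f : ℝ → ℝ) (L K : ℝ) (hL : 0 < L)
    (hf_meas : Measurable f) (hf_nonneg : ∀ x, 0 ≤ f x)
    (hf_int : ∫ x : ℝ, f x = 1)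
    (hf_lip : ∀ x y : ℝ, |f x - f y| ≤ L * |x - y|)
    (hmom_int : Integrable (fun x : ℝ => x ^ 4 * f x))
    (hmom : ∫ x : ℝ, x ^ 4 * f x ≤ 1) :
    (∀ x : ℝ, x ≠ 0 → f x ≤ Real.sqrt (2 * L) / x ^ 2) ∧
    ((∀ x : ℝ, f x ≤ K) →
      ∀ x : ℝ, x ≠ 0 → f x ≤ min K (Real.sqrt (2 * L) / x ^ 2)) := by
  have main : ∀ x : ℝ, x ≠ 0 → f x ≤ Real.sqrt (2 * L) / x ^ 2 := by
    intro x hx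
    rcases lt_or_gt_of_ne hx with hneg | hpos
    · -- use the reflected density g y = y ↦ f (-y)
      set g : ℝ → ℝ := fun y => f (-y) with hg
      have hg_nonneg : ∀ y, 0 ≤ g y := fun y => hf_nonneg (-y)
      have hg_lip : ∀ a b : ℝ, |g a - g b| ≤ L * |a - b| := by
        intro a b
        have := hf_lip (-a) (-b)
        simpa [abs_sub_comm, neg_add_eq_sub] using this
      have hcompeq : (fun y : ℝ => y ^ 4 * g y)
          = (fun y : ℝ => y ^ 4 * f y) ∘ (fun y : ℝ => -y) := by
        funext y
        show y ^ 4 * f (-y) = (-y) ^ 4 * f (-y)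
        rw [Even.neg_pow (by decide)]
      have hg_int : Integrable (fun y : ℝ => y ^ 4 * g y) := by
        rw [hcompeq]
        exact ((Measure.measurePreserving_neg (volume : Measure ℝ)).integrable_comp
          hmom_int.aestronglyMeasurable).mpr hmom_int
      have hg_mom : ∫ y : ℝ, y ^ 4 * g y ≤ 1 := by
        have : (∫ y : ℝ, y ^ 4 * g y) = ∫ y : ℝ, y ^ 4 * f y := by
          rw [hcompeq]
          exact integral_neg_eq_self (fun y : ℝ => y ^ 4 * f y) volume
        rw [this]; exact hmom
      have := key_pos g L hL hg_nonneg hg_lip hg_int hg_mom (-x) (by linarith)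
      simpa [hg] using this
    · exact key_pos f L hL hf_nonneg hf_lip hmom_int hmom x hpos
  exact ⟨main, fun hK x hx => le_min (hK x) (main x hx)⟩
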